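/- Let 𝒳 be compactly contained in ℝ^𝖽 with diameter D > 0 and metric d induced by a vector norm. Suppose the Markov kernel pair (P,Q) has kernel transfer exponent γ ≥ 0 with constant C > 0 and radius D, i.e., (P,Q) ∈ 𝒯(γ,C,D), with associated minorizing measure ν^P satisfying P^{m_P}(x,·) ≥ ε_P ν^P(·) for all x ∈ 𝒳 (ε_P ∈ (0,1), m_P ∈ ℕ), witnessing set 𝒳_Q compactly contained in 𝒳 with N_{𝒳_Q}(ε, d|_{𝒳_Q}) ≤ (1 + k_Q D/ε)^{𝖽_Q} for some 𝖽_Q ≤ 𝖽 and k_Q ≥ 1, and let π^P, π^Q be invariant distributions of P and Q. Then: if γ + 𝖽_Q ≥ 𝖽, (π^P, π^Q) ∈ 𝒟(γ+𝖽_Q, (2k_Q+1)^{𝖽_Q}/(C ε_P)); if γ + 𝖽_Q < 𝖽, (π^P, π^Q) ∈ 𝒟'(γ+𝖽_Q, 𝖽_Q, (2k_Q+1)^{𝖽_Q}/((C ε_P) ∧ 1)). In particular, (π^P, π^Q) ∈ 𝒟(γ+𝖽, 9^𝖽/(C ε_P)) always holds. -/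

import Mathlib

open MeasureTheory ProbabilityTheory
open scoped ENNReal

/-- `m`-step iterate `P^m` of a Markov kernel. -/
noncomputable def kernelIter {X : Type*} [MeasurableSpace X] (P : Kernel X X) : ℕ → Kernel X X
  | 0 => Kernel.id
  | n + 1 => Kernel.comp (kernelIter P n) P

/-- Support of a measure on a metric space: `y ∈ supp μ` iff every closed ball
around `y` has positive measure. -/
def msupport {X : Type*} [PseudoMetricSpace X] [MeasurableSpace X] (μ : Measure X) : Set X :=
  {y | ∀ r : ℝ, 0 < r → 0 < μ (Metric.closedBall y r)}

/-- The bandwidth-dependent similarity measure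
`ρ_h(ℙ,ℚ) := ∫ 1/ℙ(B(x,h)) ℚ(dx)`, with the convention `1/0 = ∞`. -/
noncomputable def rhoSim {X : Type*} [PseudoMetricSpace X] [MeasurableSpace X]
    (P Q : Measure X) (h : ℝ) : ℝ≥0∞ :=
  ∫⁻ x, (P (Metric.closedBall x h))⁻¹ ∂Q

/-- Covering number of `s` at scale `ε`: the smallest cardinality of a set of
closed `ε`-balls with centres in `s` covering `s` (`∞` if no finite cover exists). -/
noncomputable def coverNum {X : Type*} [PseudoMetricSpace X] (s : Set X) (ε : ℝ) : ℝ≥0∞ :=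
  sInf ((fun t : Finset X => (t.card : ℝ≥0∞)) ''
    {t : Finset X | ↑t ⊆ s ∧ s ⊆ ⋃ y ∈ t, Metric.closedBall y ε})

/-- Membership `(ℙ,ℚ) ∈ 𝒟(α,C)`-type condition on a space of diameter `D`:
`sup_{0<h≤D} (h/D)^α ρ_h(ℙ,ℚ) ≤ C`. -/
def alphaFamilyCond {X : Type*} [PseudoMetricSpace X] [MeasurableSpace X]
    (D α C : ℝ) (P Q : Measure X) : Prop :=
  ∀ h : ℝ, 0 < h → h ≤ D → ENNReal.ofReal ((h / D) ^ α) * rhoSim P Q h ≤ ENNReal.ofReal C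

lemma bind_kernelIter {Y : Type*} [MeasurableSpace Y] (P : Kernel Y Y)
    (μ : Measure Y) (hinv : μ.bind (fun x => P x) = μ) :
    ∀ m : ℕ, μ.bind (fun x => kernelIter P m x) = μ
  | 0 => by
    simp only [kernelIter, Kernel.id_apply]
    exact Measure.bind_dirac
  | (m + 1) => by
    have h1 : (fun x => kernelIter P (m+1) x) =
        fun x => (P x).bind (fun y => kernelIter P m y) := by
      funext x
      show (Kernel.comp (kernelIter P m) P) x = _
      rw [Kernel.comp_apply]
    rw [h1, ← Measure.bind_bind P.measurable.aemeasurable (kernelIter P m).measurable.aemeasurable, hinv,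
      bind_kernelIter P μ hinv m]

lemma measure_compl_of_msupport_subset {Y : Type*} [MetricSpace Y] [MeasurableSpace Y]
    [OpensMeasurableSpace Y] [SecondCountableTopology Y]
    (μ : Measure Y) (S : Set Y) (hsupp : msupport μ ⊆ S) : μ Sᶜ = 0 := by
  have key : ∀ y : (Sᶜ : Set Y), ∃ r : ℝ, 0 < r ∧ μ (Metric.ball (y : Y) r) = 0 := by
    rintro ⟨y, hy⟩
    have hns : y ∉ msupport μ := fun hm => hy (hsupp hm)
    simp only [msupport, Set.mem_setOf_eq, not_forall] at hns
    obtain ⟨r, hr, h0⟩ := hns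
    refine ⟨r, hr, le_antisymm ?_ zero_le⟩
    have : μ (Metric.closedBall y r) = 0 := by
      by_contra hne
      exact h0 (pos_iff_ne_zero.mpr hne)
    exact this ▸ measure_mono Metric.ball_subset_closedBall
  choose r hr hr0 using key
  obtain ⟨T, hTc, hTU⟩ := TopologicalSpace.isOpen_iUnion_countable
    (fun y : (Sᶜ : Set Y) => Metric.ball (y : Y) (r y)) (fun y => Metric.isOpen_ball)
  have hsub : Sᶜ ⊆ ⋃ y ∈ T, Metric.ball (y : Y) (r y) := by
    rw [hTU]
    intro y hy
    exact Set.mem_iUnion.mpr ⟨⟨y, hy⟩, Metric.mem_ball_self (hr ⟨y, hy⟩)⟩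
  refine le_antisymm ((measure_mono hsub).trans ?_) zero_le
  rw [(measure_biUnion_null_iff hTc).mpr (fun y _ => hr0 y)]

lemma exists_cover_card_le
    {E : Type*} [NormedAddCommGroup E] [NormedSpace ℝ E] [FiniteDimensional ℝ E]
    [MeasurableSpace E] [BorelSpace E]
    {X : Set E} (S : Set (↥X)) (D ε : ℝ) (hε : 0 < ε)
    (hdiam : ∀ x ∈ S, ∀ y ∈ S, dist x y ≤ D) :
    ∃ t : Finset (↥X), (↑t : Set ↥X) ⊆ S ∧ S ⊆ ⋃ y ∈ t, Metric.closedBall y ε ∧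
      (t.card : ℝ≥0∞) ≤ ENNReal.ofReal ((1 + 2 * D / ε) ^ Module.finrank ℝ E) := by
  classical
  rcases S.eq_empty_or_nonempty with hS | ⟨x₀, hx₀⟩
  · exact ⟨∅, by simp [hS]⟩
  have hD0 : 0 ≤ D := le_trans (by simp) (hdiam x₀ hx₀ x₀ hx₀)
  set n := Module.finrank ℝ E with hn
  set M : ℝ := (1 + 2 * D / ε) ^ n with hM
  have hM1 : (1:ℝ) ≤ 1 + 2 * D / ε := by
    have : 0 ≤ 2 * D / ε := by positivity
    linarith
  have hM0 : 0 < M := by positivity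
  set μ : Measure E := (Module.finBasis ℝ E).addHaar with hμ
  have hball0 : 0 < μ (Metric.ball 0 1) := Metric.measure_ball_pos μ 0 one_pos
  have hballT : μ (Metric.ball 0 1) < ⊤ := measure_ball_lt_top
  -- card bound for separated subsets of S
  have cardBound : ∀ u : Finset (↥X), (↑u : Set ↥X) ⊆ S →
      (∀ p ∈ u, ∀ q ∈ u, p ≠ q → ε < dist p q) → (u.card : ℝ≥0∞) ≤ ENNReal.ofReal M := by
    intro u hus husep
    set v : Finset E := u.image (Subtype.val) with hv
    have hcardv : v.card = u.card := by
      rw [hv]; exact Finset.card_image_of_injective _ Subtype.val_injective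
    have hdisj : (↑v : Set E).PairwiseDisjoint (fun p => Metric.closedBall p (ε/2)) := by
      intro p hp q hq hpq
      simp only [hv, Finset.coe_image, Set.mem_image, Finset.mem_coe] at hp hq
      obtain ⟨p', hp', rfl⟩ := hp
      obtain ⟨q', hq', rfl⟩ := hq
      have hne : p' ≠ q' := fun hEq => hpq (by rw [hEq])
      have := husep p' hp' q' hq' hne
      rw [Subtype.dist_eq] at this
      exact Metric.closedBall_disjoint_closedBall (by linarith)
    have hunion : (⋃ p ∈ v, Metric.closedBall p (ε/2)) ⊆
        Metric.closedBall (x₀ : E) (D + ε/2) := by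
      intro z hz
      simp only [Set.mem_iUnion] at hz
      obtain ⟨p, hp, hz⟩ := hz
      simp only [hv, Finset.mem_image] at hp
      obtain ⟨p', hp', rfl⟩ := hp
      have hd : dist (p' : E) (x₀ : E) ≤ D := by
        rw [← Subtype.dist_eq]
        exact hdiam p' (hus hp') x₀ hx₀
      calc dist z (x₀ : E) ≤ dist z (p' : E) + dist (p' : E) (x₀ : E) := dist_triangle _ _ _
        _ ≤ ε/2 + D := add_le_add hz hd
        _ = D + ε/2 := by ring
    have hmeas : μ (⋃ p ∈ v, Metric.closedBall p (ε/2)) =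
        ∑ p ∈ v, μ (Metric.closedBall p (ε/2)) :=
      measure_biUnion_finset hdisj (fun p _ => measurableSet_closedBall)
    have hone : ∀ p : E, μ (Metric.closedBall p (ε/2)) =
        ENNReal.ofReal ((ε/2) ^ n) * μ (Metric.ball 0 1) := fun p =>
      Measure.addHaar_closedBall μ p (by positivity)
    have hbig : μ (Metric.closedBall (x₀ : E) (D + ε/2)) =
        ENNReal.ofReal ((D + ε/2) ^ n) * μ (Metric.ball 0 1) :=
      Measure.addHaar_closedBall μ _ (by positivity)
    have hineq : (v.card : ℝ≥0∞) * (ENNReal.ofReal ((ε/2) ^ n) * μ (Metric.ball 0 1)) ≤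
        ENNReal.ofReal ((D + ε/2) ^ n) * μ (Metric.ball 0 1) := by
      calc (v.card : ℝ≥0∞) * (ENNReal.ofReal ((ε/2) ^ n) * μ (Metric.ball 0 1))
          = ∑ p ∈ v, μ (Metric.closedBall p (ε/2)) := by
            rw [Finset.sum_congr rfl (fun p _ => hone p), Finset.sum_const, nsmul_eq_mul]
        _ = μ (⋃ p ∈ v, Metric.closedBall p (ε/2)) := hmeas.symm
        _ ≤ μ (Metric.closedBall (x₀ : E) (D + ε/2)) := measure_mono hunion
        _ = _ := hbig
    have hMe : (D + ε/2) ^ n = M * (ε/2) ^ n := by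
      rw [hM, ← mul_pow]
      congr 1
      field_simp
      ring
    rw [hMe, ENNReal.ofReal_mul hM0.le] at hineq
    have hc2 : ENNReal.ofReal ((ε/2) ^ n) * μ (Metric.ball 0 1) ≠ 0 := by
      refine mul_ne_zero ?_ hball0.ne'
      simp only [ne_eq, ENNReal.ofReal_eq_zero, not_le]
      positivity
    have hcT : ENNReal.ofReal ((ε/2) ^ n) * μ (Metric.ball 0 1) ≠ ⊤ :=
      ENNReal.mul_ne_top ENNReal.ofReal_ne_top hballT.ne
    rw [← hcardv]
    rw [mul_assoc] at hineq
    exact (ENNReal.mul_le_mul_iff_left hc2 hcT).mp hineq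
  -- choose a separated set of maximal cardinality
  set K : Set ℕ := {k | ∃ u : Finset (↥X), ((↑u : Set ↥X) ⊆ S ∧
    (∀ p ∈ u, ∀ q ∈ u, p ≠ q → ε < dist p q)) ∧ u.card = k} with hK
  have hKne : K.Nonempty := ⟨0, ∅, ⟨by simp, by simp⟩, rfl⟩
  have hKbdd : BddAbove K := by
    refine ⟨Nat.ceil M, ?_⟩
    rintro k ⟨u, ⟨hus, husep⟩, rfl⟩
    have := cardBound u hus husep
    have h2 : (u.card : ℝ≥0∞) ≤ (Nat.ceil M : ℝ≥0∞) := by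
      refine this.trans ?_
      rw [← ENNReal.ofReal_natCast]
      exact ENNReal.ofReal_le_ofReal (Nat.le_ceil M)
    exact_mod_cast h2
  obtain ⟨u, ⟨hus, husep⟩, hucard⟩ := Nat.sSup_mem hKne hKbdd
  refine ⟨u, hus, ?_, hucard ▸ cardBound u hus husep⟩
  intro x hx
  by_contra hnx
  simp only [Set.mem_iUnion, Metric.mem_closedBall, not_exists, not_le] at hnx
  have hxu : x ∉ u := fun hxu => by
    have := hnx x hxu
    simp at this
    linarith
  have hins : (insert x u).card ∈ K := by
    refine ⟨insert x u, ⟨?_, ?_⟩, rfl⟩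
    · intro p hp
      rcases Finset.mem_insert.mp hp with rfl | hp
      · exact hx
      · exact hus hp
    · intro p hp q hq hpq
      rcases Finset.mem_insert.mp hp with hpx | hp
      · rcases Finset.mem_insert.mp hq with hqx | hq
        · exact absurd (hpx.trans hqx.symm) hpq
        · rw [hpx]; exact hnx q hq
      · rcases Finset.mem_insert.mp hq with hqx | hq
        · rw [hqx, dist_comm]; exact hnx p hp
        · exact husep p hp q hq hpq
  have hle : (insert x u).card ≤ sSup K := le_csSup hKbdd hins
  rw [Finset.card_insert_of_notMem hxu, hucard] at hle
  omega

lemma exists_cover_of_coverNum_le {Y : Type*} [PseudoMetricSpace Y] (s : Set Y) (ε : ℝ)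
    (B : ℝ≥0∞) (hB : B ≠ ⊤) (h : coverNum s ε ≤ B) :
    ∃ t : Finset Y, s ⊆ ⋃ y ∈ t, Metric.closedBall y ε ∧ (t.card : ℝ≥0∞) ≤ B := by
  set 𝒞 := {t : Finset Y | ↑t ⊆ s ∧ s ⊆ ⋃ y ∈ t, Metric.closedBall y ε} with h𝒞
  have hne : 𝒞.Nonempty := by
    by_contra hne
    rw [Set.not_nonempty_iff_eq_empty] at hne
    have : coverNum s ε = ⊤ := by
      rw [coverNum, ← h𝒞, hne]
      simp
    exact hB (top_le_iff.mp (this ▸ h))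
  have hKne : (Finset.card '' 𝒞).Nonempty := hne.image _
  obtain ⟨t, ht, htcard⟩ := Nat.sInf_mem hKne
  refine ⟨t, ht.2, le_trans ?_ h⟩
  refine le_sInf ?_
  rintro b ⟨t', ht', rfl⟩
  have : t.card ≤ t'.card := htcard ▸ Nat.sInf_le (Set.mem_image_of_mem _ ht')
  show (t.card : ℝ≥0∞) ≤ (t'.card : ℝ≥0∞)
  exact_mod_cast this

lemma rhoSim_eq_setLIntegral {Y : Type*} [PseudoMetricSpace Y] [MeasurableSpace Y]
    (P μ : Measure Y) (S : Set Y) (hS : MeasurableSet S) (hfull : μ Sᶜ = 0) (h : ℝ) :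
    rhoSim P μ h = ∫⁻ x in S, (P (Metric.closedBall x h))⁻¹ ∂μ := by
  rw [rhoSim, ← lintegral_add_compl _ hS, setLIntegral_measure_zero _ _ hfull, add_zero]

lemma rhoSim_self_le_card {Y : Type*} [PseudoMetricSpace Y] [MeasurableSpace Y]
    [OpensMeasurableSpace Y]
    (μ : Measure Y) [IsFiniteMeasure μ] (S : Set Y) (hS : MeasurableSet S) (hfull : μ Sᶜ = 0)
    (h : ℝ) (t : Finset Y) (hcover : S ⊆ ⋃ y ∈ t, Metric.closedBall y (h/2)) :
    rhoSim μ μ h ≤ (t.card : ℝ≥0∞) := by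
  rw [rhoSim_eq_setLIntegral μ μ S hS hfull h]
  have perball : ∀ y : Y, ∫⁻ x in Metric.closedBall y (h/2),
      (μ (Metric.closedBall x h))⁻¹ ∂μ ≤ 1 := by
    intro y
    have hsub : ∀ x ∈ Metric.closedBall y (h/2),
        Metric.closedBall y (h/2) ⊆ Metric.closedBall x h := by
      intro x hx z hz
      rw [Metric.mem_closedBall] at *
      calc dist z x ≤ dist z y + dist y x := dist_triangle _ _ _
        _ ≤ h/2 + h/2 := add_le_add hz (dist_comm y x ▸ hx)
        _ = h := by ring
    calc ∫⁻ x in Metric.closedBall y (h/2), (μ (Metric.closedBall x h))⁻¹ ∂μ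
        ≤ ∫⁻ _ in Metric.closedBall y (h/2), (μ (Metric.closedBall y (h/2)))⁻¹ ∂μ := by
          refine setLIntegral_mono' measurableSet_closedBall (fun x hx => ?_)
          exact ENNReal.inv_le_inv' (measure_mono (hsub x hx))
      _ = (μ (Metric.closedBall y (h/2)))⁻¹ * μ (Metric.closedBall y (h/2)) :=
          setLIntegral_const _ _
      _ ≤ 1 := by
          rcases eq_or_ne (μ (Metric.closedBall y (h/2))) 0 with h0 | h0
          · rw [h0, mul_zero]; exact zero_le_one
          · rw [ENNReal.inv_mul_cancel h0 (measure_ne_top μ _)]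
  calc ∫⁻ x in S, (μ (Metric.closedBall x h))⁻¹ ∂μ
      ≤ ∫⁻ x in ⋃ y ∈ t, Metric.closedBall y (h/2), (μ (Metric.closedBall x h))⁻¹ ∂μ :=
        lintegral_mono_set hcover
    _ ≤ ∑' y : t, ∫⁻ x in Metric.closedBall (y : Y) (h/2), (μ (Metric.closedBall x h))⁻¹ ∂μ := by
        rw [show (⋃ y ∈ t, Metric.closedBall y (h/2)) =
          ⋃ y : t, Metric.closedBall (y : Y) (h/2) from by simp [Set.iUnion_subtype]]
        exact lintegral_iUnion_le _ _
    _ ≤ ∑' _ : t, (1 : ℝ≥0∞) := ENNReal.tsum_le_tsum (fun y => perball y)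
    _ = (t.card : ℝ≥0∞) := by
        rw [tsum_fintype]
        simp [Finset.card_univ]

/-- If `(P,Q) ∈ 𝒯(γ,C,D)` on a compact `𝒳 ⊂ ℝ^𝖽` of diameter `D`, with
witnessing set `𝒳_Q` whose covering numbers satisfy
`N_{𝒳_Q}(ε) ≤ (1+k_Q D/ε)^{𝖽_Q}` (`𝖽_Q ≤ 𝖽`, `k_Q ≥ 1`), then the invariant
distributions `(π^P,π^Q)` belong to `𝒟(γ+𝖽_Q, (2k_Q+1)^{𝖽_Q}/(Cε_P))` when
`γ+𝖽_Q ≥ 𝖽`, to `𝒟'(γ+𝖽_Q, 𝖽_Q, (2k_Q+1)^{𝖽_Q}/((Cε_P)∧1))` when `γ+𝖽_Q < 𝖽`,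
and in any case to `𝒟(γ+𝖽, 9^𝖽/(Cε_P))`. -/
theorem transfer_exponent_implies_alpha_family
    {E : Type*} [NormedAddCommGroup E] [NormedSpace ℝ E] [FiniteDimensional ℝ E]
    [MeasurableSpace E] [BorelSpace E]
    (dd : ℕ) (hdim : Module.finrank ℝ E = dd)
    -- the state space `𝒳 ⋐ ℝ^𝖽` with diameter `D > 0`
    (X : Set E) (hXcpt : IsCompact X) (D : ℝ) (hD : 0 < D) (hdiam : Metric.diam X = D)
    (P Q : Kernel X X) [IsMarkovKernel P] [IsMarkovKernel Q]
    (πP πQ : Measure X) [IsProbabilityMeasure πP] [IsProbabilityMeasure πQ]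
    -- `π^P`, `π^Q` are invariant for `P`, `Q`
    (hinvP : πP.bind (fun x => P x) = πP)
    (hinvQ : πQ.bind (fun x => Q x) = πQ)
    -- kernel transfer exponent data: `(P,Q) ∈ 𝒯(γ,C,D)`
    (γ : ℝ) (hγ : 0 ≤ γ) (C : ℝ) (hC : 0 < C)
    (mP : ℕ) (hmP : 1 ≤ mP) (εP : ℝ) (hεP0 : 0 < εP) (hεP1 : εP < 1)
    (νP : Measure X) [IsProbabilityMeasure νP]
    -- `ν^P` is a minorizing measure: `P^{m_P}(x,·) ≥ ε_P ν^P`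
    (hminor : ∀ x : X, ∀ A : Set X, MeasurableSet A →
      ENNReal.ofReal εP * νP A ≤ kernelIter P mP x A)
    (mQ : ℕ) (hmQ : 1 ≤ mQ)
    -- witnessing set `𝒳_Q ⋐ 𝒳`, carrying all `Q^{m_Q}(x,·)`
    (XQ : Set X) (hXQclosed : IsClosed XQ) (hXQcpt : IsCompact XQ)
    (hQsupp : ∀ x : X, msupport (kernelIter Q mQ x) ⊆ XQ)
    -- `ν^P(B(x,h)) ≥ C (h/D)^γ Q^{m_Q}(y, B(x,h))` for `x, y ∈ 𝒳_Q`, `0 < h ≤ D`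
    (htransfer : ∀ x ∈ XQ, ∀ y ∈ XQ, ∀ h : ℝ, 0 < h → h ≤ D →
      ENNReal.ofReal (C * (h / D) ^ γ) * kernelIter Q mQ y (Metric.closedBall x h) ≤
        νP (Metric.closedBall x h))
    -- covering bound `N_{𝒳_Q}(ε) ≤ (1 + k_Q D/ε)^{𝖽_Q}` with `𝖽_Q ≤ 𝖽`, `k_Q ≥ 1`
    (dQ : ℝ) (hdQ0 : 0 ≤ dQ) (hdQd : dQ ≤ (dd : ℝ)) (kQ : ℝ) (hkQ : 1 ≤ kQ)
    (hcov : ∀ ε : ℝ, 0 < ε → coverNum XQ ε ≤ ENNReal.ofReal ((1 + kQ * D / ε) ^ dQ)) :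
    (((dd : ℝ) ≤ γ + dQ →
        alphaFamilyCond D (γ + dQ) ((2 * kQ + 1) ^ dQ / (C * εP)) πP πQ) ∧
      (γ + dQ < (dd : ℝ) →
        alphaFamilyCond D (γ + dQ) ((2 * kQ + 1) ^ dQ / min (C * εP) 1) πP πQ ∧
          alphaFamilyCond D dQ ((2 * kQ + 1) ^ dQ / min (C * εP) 1) πQ πQ)) ∧
      alphaFamilyCond D (γ + (dd : ℝ)) ((9 : ℝ) ^ dd / (C * εP)) πP πQ := by
  have hXQmeas : MeasurableSet XQ := hXQclosed.measurableSet
  -- πQ is carried by XQ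
  have hiterQ : πQ.bind (fun y => kernelIter Q mQ y) = πQ := bind_kernelIter Q πQ hinvQ mQ
  have hQfull : πQ XQᶜ = 0 := by
    have hbind : πQ XQᶜ = ∫⁻ y, kernelIter Q mQ y XQᶜ ∂πQ := by
      conv_lhs => rw [← hiterQ]
      exact Measure.bind_apply hXQmeas.compl (kernelIter Q mQ).measurable.aemeasurable
    rw [hbind]
    have hz : ∀ y : X, kernelIter Q mQ y XQᶜ = 0 := fun y =>
      measure_compl_of_msupport_subset _ XQ (hQsupp y)
    simp [hz]
  have hQae : ∀ᵐ y ∂πQ, y ∈ XQ := by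
    rw [MeasureTheory.ae_iff]
    exact hQfull
  -- πP dominates εP νP
  have hiterP : πP.bind (fun x => kernelIter P mP x) = πP := bind_kernelIter P πP hinvP mP
  have hPlow : ∀ A : Set ↥X, MeasurableSet A → ENNReal.ofReal εP * νP A ≤ πP A := by
    intro A hA
    conv_rhs => rw [← hiterP]
    rw [Measure.bind_apply hA (kernelIter P mP).measurable.aemeasurable]
    calc ENNReal.ofReal εP * νP A = ∫⁻ _, ENNReal.ofReal εP * νP A ∂πP := by
          rw [lintegral_const, measure_univ, mul_one]
      _ ≤ ∫⁻ x, kernelIter P mP x A ∂πP := lintegral_mono (fun x => hminor x A hA)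
  -- key pointwise comparison on XQ
  have key : ∀ h : ℝ, 0 < h → h ≤ D → ∀ x ∈ XQ,
      ENNReal.ofReal (εP * (C * (h / D) ^ γ)) * πQ (Metric.closedBall x h) ≤
        πP (Metric.closedBall x h) := by
    intro h hh0 hhD x hx
    have hQball : πQ (Metric.closedBall x h) =
        ∫⁻ y, kernelIter Q mQ y (Metric.closedBall x h) ∂πQ := by
      conv_lhs => rw [← hiterQ]
      exact Measure.bind_apply measurableSet_closedBall (kernelIter Q mQ).measurable.aemeasurable
    have step1 : ENNReal.ofReal (C * (h / D) ^ γ) * πQ (Metric.closedBall x h) ≤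
        νP (Metric.closedBall x h) := by
      rw [hQball, ← lintegral_const_mul' _ _ ENNReal.ofReal_ne_top]
      calc ∫⁻ y, ENNReal.ofReal (C * (h / D) ^ γ) *
            kernelIter Q mQ y (Metric.closedBall x h) ∂πQ
          ≤ ∫⁻ _, νP (Metric.closedBall x h) ∂πQ :=
            lintegral_mono_ae (hQae.mono (fun y hy => htransfer x hx y hy h hh0 hhD))
        _ = νP (Metric.closedBall x h) := by rw [lintegral_const, measure_univ, mul_one]
    calc ENNReal.ofReal (εP * (C * (h / D) ^ γ)) * πQ (Metric.closedBall x h)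
        = ENNReal.ofReal εP *
            (ENNReal.ofReal (C * (h / D) ^ γ) * πQ (Metric.closedBall x h)) := by
          rw [ENNReal.ofReal_mul hεP0.le, mul_assoc]
      _ ≤ ENNReal.ofReal εP * νP (Metric.closedBall x h) := mul_le_mul_right step1 _
      _ ≤ πP (Metric.closedBall x h) := hPlow _ measurableSet_closedBall
  -- comparison of similarity measures
  have hρcomp : ∀ h : ℝ, 0 < h → h ≤ D →
      rhoSim πP πQ h ≤ (ENNReal.ofReal (εP * (C * (h / D) ^ γ)))⁻¹ * rhoSim πQ πQ h := by
    intro h hh0 hhD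
    have hgpos : 0 < (h / D) ^ γ := Real.rpow_pos_of_pos (by positivity) _
    have hcpos : 0 < εP * (C * (h / D) ^ γ) := by positivity
    have hc0 : ENNReal.ofReal (εP * (C * (h / D) ^ γ)) ≠ 0 := by
      simp [ENNReal.ofReal_eq_zero, not_le, hcpos]
    rw [rhoSim_eq_setLIntegral πP πQ XQ hXQmeas hQfull h,
      rhoSim_eq_setLIntegral πQ πQ XQ hXQmeas hQfull h]
    calc ∫⁻ x in XQ, (πP (Metric.closedBall x h))⁻¹ ∂πQ
        ≤ ∫⁻ x in XQ, (ENNReal.ofReal (εP * (C * (h / D) ^ γ)))⁻¹ *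
            (πQ (Metric.closedBall x h))⁻¹ ∂πQ := by
          refine setLIntegral_mono' hXQmeas (fun x hx => ?_)
          rw [← ENNReal.mul_inv (Or.inl hc0) (Or.inl ENNReal.ofReal_ne_top)]
          exact ENNReal.inv_le_inv' (key h hh0 hhD x hx)
      _ = (ENNReal.ofReal (εP * (C * (h / D) ^ γ)))⁻¹ *
            ∫⁻ x in XQ, (πQ (Metric.closedBall x h))⁻¹ ∂πQ :=
          lintegral_const_mul' _ _ (ENNReal.inv_ne_top.mpr hc0)
  -- covering-number bound on ρ(πQ,πQ)
  have hρQQ : ∀ h : ℝ, 0 < h → h ≤ D →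
      rhoSim πQ πQ h ≤ ENNReal.ofReal ((1 + 2 * kQ * D / h) ^ dQ) := by
    intro h hh0 hhD
    obtain ⟨t, htcov, htcard⟩ := exists_cover_of_coverNum_le XQ (h/2) _
      ENNReal.ofReal_ne_top (hcov (h/2) (by positivity))
    refine (rhoSim_self_le_card πQ XQ hXQmeas hQfull h t htcov).trans (htcard.trans ?_)
    have heq : 1 + kQ * D / (h/2) = 1 + 2 * kQ * D / h := by
      field_simp
    rw [heq]
  -- volume bound on ρ(πQ,πQ)
  have hρQQvol : ∀ h : ℝ, 0 < h →
      rhoSim πQ πQ h ≤ ENNReal.ofReal ((1 + 4 * D / h) ^ dd) := by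
    intro h hh0
    have hdiamXQ : ∀ x ∈ XQ, ∀ y ∈ XQ, dist x y ≤ D := by
      intro x _ y _
      rw [Subtype.dist_eq, ← hdiam]
      exact Metric.dist_le_diam_of_mem hXcpt.isBounded x.2 y.2
    obtain ⟨t, -, htcov, htcard⟩ := exists_cover_card_le XQ D (h/2) (by positivity) hdiamXQ
    rw [hdim] at htcard
    refine (rhoSim_self_le_card πQ XQ hXQmeas hQfull h t htcov).trans (htcard.trans ?_)
    have heq : 1 + 2 * D / (h/2) = 1 + 4 * D / h := by
      field_simp
      ring
    rw [heq]
  -- generic ENNReal reduction to a real inequality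
  have generic : ∀ h : ℝ, 0 < h → h ≤ D → ∀ N K : ℝ,
      rhoSim πQ πQ h ≤ ENNReal.ofReal N →
      ∀ α : ℝ, (h / D) ^ α * ((εP * (C * (h / D) ^ γ))⁻¹ * N) ≤ K →
      ENNReal.ofReal ((h / D) ^ α) * rhoSim πP πQ h ≤ ENNReal.ofReal K := by
    intro h hh0 hhD N K hN α hreal
    have hgpos : 0 < (h / D) ^ γ := Real.rpow_pos_of_pos (by positivity) _
    have hcpos : 0 < εP * (C * (h / D) ^ γ) := by positivity
    calc ENNReal.ofReal ((h / D) ^ α) * rhoSim πP πQ h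
        ≤ ENNReal.ofReal ((h / D) ^ α) *
            ((ENNReal.ofReal (εP * (C * (h / D) ^ γ)))⁻¹ * ENNReal.ofReal N) :=
          mul_le_mul_right ((hρcomp h hh0 hhD).trans (mul_le_mul_right hN _)) _
      _ = ENNReal.ofReal ((h / D) ^ α * ((εP * (C * (h / D) ^ γ))⁻¹ * N)) := by
          rw [← ENNReal.ofReal_inv_of_pos hcpos, ← ENNReal.ofReal_mul (by positivity),
            ← ENNReal.ofReal_mul (by positivity)]
      _ ≤ ENNReal.ofReal K := ENNReal.ofReal_le_ofReal hreal
  -- basic real facts for 0 < h ≤ D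
  have hCε : 0 < C * εP := by positivity
  -- the main real inequality for the (γ + dQ) exponent
  have R1 : ∀ h : ℝ, 0 < h → h ≤ D →
      (h / D) ^ (γ + dQ) * ((εP * (C * (h / D) ^ γ))⁻¹ * (1 + 2 * kQ * D / h) ^ dQ) ≤
        (2 * kQ + 1) ^ dQ / (C * εP) := by
    intro h hh0 hhD
    have ha : 0 < h / D := by positivity
    have hb : 0 < D / h := by positivity
    have hab : (h / D) * (D / h) = 1 := by field_simp
    have hb1 : 1 ≤ D / h := (one_le_div hh0).mpr hhD
    have hgpos : 0 < (h / D) ^ γ := Real.rpow_pos_of_pos ha _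
    have hNle : (1 + 2 * kQ * D / h) ^ dQ ≤ ((2 * kQ + 1) * (D / h)) ^ dQ := by
      refine Real.rpow_le_rpow (by positivity) ?_ hdQ0
      have : 2 * kQ * D / h = 2 * kQ * (D / h) := by ring
      nlinarith
    have e1 : (h / D) ^ (γ + dQ) = (h / D) ^ γ * (h / D) ^ dQ := Real.rpow_add ha _ _
    have e3 : ((2 * kQ + 1) * (D / h)) ^ dQ = (2 * kQ + 1) ^ dQ * (D / h) ^ dQ :=
      Real.mul_rpow (by positivity) hb.le
    have e4 : (h / D) ^ dQ * (D / h) ^ dQ = 1 := by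
      rw [← Real.mul_rpow ha.le hb.le, hab, Real.one_rpow]
    have hupos : 0 < (h / D) ^ dQ := Real.rpow_pos_of_pos ha _
    have hv : (D / h) ^ dQ = ((h / D) ^ dQ)⁻¹ := eq_inv_of_mul_eq_one_left (by
      rw [mul_comm]; exact e4)
    calc (h / D) ^ (γ + dQ) * ((εP * (C * (h / D) ^ γ))⁻¹ * (1 + 2 * kQ * D / h) ^ dQ)
        ≤ (h / D) ^ (γ + dQ) * ((εP * (C * (h / D) ^ γ))⁻¹ *
            ((2 * kQ + 1) ^ dQ * (D / h) ^ dQ)) := by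
          refine mul_le_mul_of_nonneg_left ?_ (Real.rpow_nonneg ha.le _)
          refine mul_le_mul_of_nonneg_left (e3 ▸ hNle) (by positivity)
      _ = (2 * kQ + 1) ^ dQ / (C * εP) := by
          rw [e1, hv]
          field_simp
  refine ⟨⟨?_, ?_⟩, ?_⟩
  · -- case γ + dQ ≥ d
    intro _ h hh0 hhD
    exact generic h hh0 hhD _ _ (hρQQ h hh0 hhD) _ (R1 h hh0 hhD)
  · -- case γ + dQ < d
    intro _
    have hmin : 0 < min (C * εP) 1 := lt_min hCε one_pos
    have hmin1 : min (C * εP) 1 ≤ 1 := min_le_right _ _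
    constructor
    · intro h hh0 hhD
      refine generic h hh0 hhD _ _ (hρQQ h hh0 hhD) _ ((R1 h hh0 hhD).trans ?_)
      refine div_le_div_of_nonneg_left (by positivity) hmin (min_le_left _ _)
    · intro h hh0 hhD
      have ha : 0 < h / D := by positivity
      have hb : 0 < D / h := by positivity
      have hab : (h / D) * (D / h) = 1 := by field_simp
      have hb1 : 1 ≤ D / h := (one_le_div hh0).mpr hhD
      have hNle : (1 + 2 * kQ * D / h) ^ dQ ≤ ((2 * kQ + 1) * (D / h)) ^ dQ := by
        refine Real.rpow_le_rpow (by positivity) ?_ hdQ0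
        have : 2 * kQ * D / h = 2 * kQ * (D / h) := by ring
        nlinarith
      have e3 : ((2 * kQ + 1) * (D / h)) ^ dQ = (2 * kQ + 1) ^ dQ * (D / h) ^ dQ :=
        Real.mul_rpow (by positivity) hb.le
      have e4 : (h / D) ^ dQ * (D / h) ^ dQ = 1 := by
        rw [← Real.mul_rpow ha.le hb.le, hab, Real.one_rpow]
      calc ENNReal.ofReal ((h / D) ^ dQ) * rhoSim πQ πQ h
          ≤ ENNReal.ofReal ((h / D) ^ dQ) * ENNReal.ofReal ((1 + 2 * kQ * D / h) ^ dQ) :=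
            mul_le_mul_right (hρQQ h hh0 hhD) _
        _ = ENNReal.ofReal ((h / D) ^ dQ * (1 + 2 * kQ * D / h) ^ dQ) :=
            (ENNReal.ofReal_mul (Real.rpow_nonneg ha.le _)).symm
        _ ≤ ENNReal.ofReal ((2 * kQ + 1) ^ dQ / min (C * εP) 1) := by
            refine ENNReal.ofReal_le_ofReal ?_
            have h1 : (h / D) ^ dQ * (1 + 2 * kQ * D / h) ^ dQ ≤ (2 * kQ + 1) ^ dQ := by
              calc (h / D) ^ dQ * (1 + 2 * kQ * D / h) ^ dQ
                  ≤ (h / D) ^ dQ * ((2 * kQ + 1) ^ dQ * (D / h) ^ dQ) := by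
                    refine mul_le_mul_of_nonneg_left (e3 ▸ hNle) (Real.rpow_nonneg ha.le _)
                _ = (2 * kQ + 1) ^ dQ * ((h / D) ^ dQ * (D / h) ^ dQ) := by ring
                _ = (2 * kQ + 1) ^ dQ := by rw [e4, mul_one]
            refine h1.trans ?_
            rw [le_div_iff₀ hmin]
            nlinarith [Real.rpow_nonneg (by positivity : (0:ℝ) ≤ 2 * kQ + 1) dQ]
  · -- the 9^d bound
    intro h hh0 hhD
    refine generic h hh0 hhD _ _ (hρQQvol h hh0) _ ?_
    have ha : 0 < h / D := by positivity
    have hgpos : 0 < (h / D) ^ γ := Real.rpow_pos_of_pos ha _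
    have e1 : (h / D) ^ (γ + (dd : ℝ)) = (h / D) ^ γ * (h / D) ^ dd := by
      rw [Real.rpow_add ha, Real.rpow_natCast]
    have e2 : (h / D) ^ dd * (1 + 4 * D / h) ^ dd = ((h / D) * (1 + 4 * D / h)) ^ dd :=
      (mul_pow _ _ _).symm
    have e5 : (h / D) * (1 + 4 * D / h) = h / D + 4 := by
      field_simp
    have e6 : ((h / D) * (1 + 4 * D / h)) ^ dd ≤ (9 : ℝ) ^ dd := by
      refine pow_le_pow_left₀ (by positivity) ?_ dd
      rw [e5]
      have : h / D ≤ 1 := (div_le_one hD).mpr hhD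
      linarith
    calc (h / D) ^ (γ + (dd : ℝ)) * ((εP * (C * (h / D) ^ γ))⁻¹ * (1 + 4 * D / h) ^ dd)
        = ((h / D) ^ γ * (εP * (C * (h / D) ^ γ))⁻¹) *
            ((h / D) ^ dd * (1 + 4 * D / h) ^ dd) := by rw [e1]; ring
      _ = (C * εP)⁻¹ * ((h / D) * (1 + 4 * D / h)) ^ dd := by
          rw [e2]
          congr 1
          field_simp
      _ ≤ (C * εP)⁻¹ * (9 : ℝ) ^ dd := by
          refine mul_le_mul_of_nonneg_left e6 (by positivity)
      _ = (9 : ℝ) ^ dd / (C * εP) := by rw [div_eq_mul_inv, mul_comm]
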